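/- Let D₀ = id, D₁, D₂, … be the unique sequence of endomorphisms of ⋀M_n satisfying the h-th Leibniz rule D_h(p ∧ q) = Σ_{h₁+h₂=h} D_{h₁}p ∧ D_{h₂}q and the initial conditions D_l ε^i = ε^{i+l} on M_n. Then the operators D_i pairwise commute: D_i ∘ D_j = D_j ∘ D_i on ⋀M_n for all i, j ≥ 0. -/

import Mathlib

open ExteriorAlgebra in
/-- The Hasse–Schmidt derivation operators `D₀ = id, D₁, D₂, …` on `⋀M_n`
(satisfying the `h`-th Leibniz rule and the initial conditions `D_l ε^i = ε^{i+l}`)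
pairwise commute. -/
theorem hasseSchmidt_comm (n : ℕ) (M : Type*) [AddCommGroup M] [Module ℤ M]
    (ε : ℕ → M) (hε : ∀ m : ℕ, n < m → ε m = 0)
    (hspan : Submodule.span ℤ {x : M | ∃ i : ℕ, 1 ≤ i ∧ i ≤ n ∧ x = ε i} = ⊤)
    (D : ℕ → Module.End ℤ (ExteriorAlgebra ℤ M))
    (hD0 : D 0 = 1)
    (hLeib : ∀ (h : ℕ) (p q : ExteriorAlgebra ℤ M),
      D h (p * q) = ∑ x ∈ Finset.HasAntidiagonal.antidiagonal h, D x.1 p * D x.2 q)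
    (hinit : ∀ l i : ℕ, 1 ≤ i → D l (ι ℤ (ε i)) = ι ℤ (ε (i + l))) :
    ∀ i j : ℕ, D i * D j = D j * D i := by
  -- Step 1: `D h 1 = 0` for `h ≥ 1`.
  have hone : ∀ h : ℕ, 1 ≤ h → D h (1 : ExteriorAlgebra ℤ M) = 0 := by
    intro h
    induction h using Nat.strong_induction_on with
    | _ h IH =>
      intro hh
      have key := hLeib h 1 1
      rw [one_mul, Finset.Nat.sum_antidiagonal_eq_sum_range_succ_mk,
        Finset.sum_range_succ] at key
      have hmid : ∑ k ∈ Finset.range h, D k 1 * D (h - k) 1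
          = D h (1 : ExteriorAlgebra ℤ M) := by
        rw [Finset.sum_eq_single_of_mem 0 (Finset.mem_range.mpr hh)]
        · simp [hD0]
        · intro k hk hk0
          rw [IH k (Finset.mem_range.mp hk) (Nat.one_le_iff_ne_zero.mpr hk0), zero_mul]
      rw [hmid] at key
      simp only [Nat.sub_self, hD0, Module.End.one_apply, mul_one] at key
      exact (left_eq_add.mp key)
  -- Step 2: commutation on `1`.
  have hone' : ∀ i j, D i (D j (1 : ExteriorAlgebra ℤ M)) = D j (D i 1) := by
    intro i j
    rcases Nat.eq_zero_or_pos i with hi | hi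
    · subst hi; simp [hD0]
    rcases Nat.eq_zero_or_pos j with hj | hj
    · subst hj; simp [hD0]
    rw [hone i hi, hone j hj, map_zero, map_zero]
  -- Step 3: commutation everywhere.
  suffices H : ∀ x : ExteriorAlgebra ℤ M, ∀ i j, D i (D j x) = D j (D i x) by
    intro i j
    exact LinearMap.ext fun x => H x i j
  intro x
  induction x using ExteriorAlgebra.induction with
  | algebraMap r =>
    intro i j
    rw [Algebra.algebraMap_eq_smul_one, map_smul, map_smul, map_smul, map_smul,
      hone' i j]
  | ι m =>
    have hm : m ∈ Submodule.span ℤ {x : M | ∃ i : ℕ, 1 ≤ i ∧ i ≤ n ∧ x = ε i} := by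
      rw [hspan]; trivial
    induction hm using Submodule.span_induction with
    | mem y hy =>
      obtain ⟨k, hk1, hkn, rfl⟩ := hy
      intro i j
      rw [hinit j k hk1, hinit i (k + j) (by omega), hinit i k hk1,
        hinit j (k + i) (by omega)]
      have : k + j + i = k + i + j := by omega
      rw [this]
    | zero => intro i j; simp
    | add y z _ _ hy hz => intro i j; simp [map_add, hy i j, hz i j]
    | smul r y _ hy => intro i j; rw [LinearMap.map_smul, map_smul, map_smul, map_smul, map_smul, hy i j]
  | mul a b ha hb =>
    intro i j
    calc D i (D j (a * b))
        = ∑ p ∈ Finset.HasAntidiagonal.antidiagonal j, ∑ q ∈ Finset.HasAntidiagonal.antidiagonal i,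
            D q.1 (D p.1 a) * D q.2 (D p.2 b) := by
          rw [hLeib j a b, map_sum]
          exact Finset.sum_congr rfl fun p _ => hLeib i _ _
      _ = ∑ q ∈ Finset.HasAntidiagonal.antidiagonal i, ∑ p ∈ Finset.HasAntidiagonal.antidiagonal j,
            D p.1 (D q.1 a) * D p.2 (D q.2 b) := by
          rw [Finset.sum_comm]
          exact Finset.sum_congr rfl fun q _ => Finset.sum_congr rfl fun p _ => by
            rw [ha q.1 p.1, hb q.2 p.2]
      _ = D j (D i (a * b)) := by
          rw [hLeib i a b, map_sum]
          exact (Finset.sum_congr rfl fun q _ => (hLeib j _ _)).symm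
  | add a b ha hb =>
    intro i j; simp [map_add, ha i j, hb i j]
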